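/- Let S be a finite subset of ℝ × ℝ and let (a, b) ∈ S be Pareto-optimal in S. Suppose the set S' = { s ∈ S : s.2 < b } is nonempty. Let a' be the minimum of the first coordinates of points of S', and let b' be the minimum of the second coordinates of points of the set { s ∈ S' : s.1 = a' }. Then a < a', the point (a', b') ∈ S is Pareto-optimal in S, and there is no point p that is Pareto-optimal in S with a < p.1 < a'. -/
import Mathlib


/-- A point `p` of `S ⊆ ℝ × ℝ` is Pareto-optimal in `S` if `p ∈ S` and no `q ∈ S`
dominates it. -/
def ParetoOptimal (S : Set (ℝ × ℝ)) (p : ℝ × ℝ) : Prop :=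
  p ∈ S ∧ ¬ ∃ q ∈ S, q.1 ≤ p.1 ∧ q.2 ≤ p.2 ∧ (q.1 < p.1 ∨ q.2 < p.2)

/-- Correctness of the inductive step of Algorithm 2: from the Pareto-optimal point
`(a, b)`, minimizing the first coordinate over `S' = {s ∈ S | s.2 < b}` and then the
second coordinate among the points of `S'` achieving that minimum yields exactly the
next Pareto-optimal point of `S`. -/
theorem pareto_frontier_next_point
    (S : Finset (ℝ × ℝ)) (a b : ℝ)
    (hab : (a, b) ∈ S) (hpar : ParetoOptimal ↑S (a, b))
    (hne : { s ∈ (↑S : Set (ℝ × ℝ)) | s.2 < b }.Nonempty)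
    (a' b' : ℝ)
    (ha' : IsLeast (Prod.fst '' { s ∈ (↑S : Set (ℝ × ℝ)) | s.2 < b }) a')
    (hb' : IsLeast (Prod.snd '' { s ∈ (↑S : Set (ℝ × ℝ)) | s.2 < b ∧ s.1 = a' }) b') :
    a < a' ∧ (a', b') ∈ S ∧ ParetoOptimal ↑S (a', b') ∧
      ¬ ∃ p : ℝ × ℝ, ParetoOptimal ↑S p ∧ a < p.1 ∧ p.1 < a' := by
  obtain ⟨s, ⟨hsS, hsb, hsa⟩, hsnd⟩ := hb'.1
  -- s ∈ S, s.2 < b, s.1 = a', s.2 = b'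
  have hmem : (a', b') ∈ S := by
    have : s = (a', b') := Prod.ext hsa hsnd
    rwa [← this]
  have hb'b : b' < b := hsnd ▸ hsb
  have haa' : a < a' := by
    by_contra h
    push_neg at h
    exact hpar.2 ⟨(a', b'), by exact_mod_cast hmem, h, le_of_lt hb'b, Or.inr hb'b⟩
  refine ⟨haa', hmem, ⟨by exact_mod_cast hmem, ?_⟩, ?_⟩
  · rintro ⟨q, hqS, hq1, hq2, hq3⟩
    have hq2b : q.2 < b := lt_of_le_of_lt hq2 hb'b
    have hqa' : a' ≤ q.1 := ha'.2 ⟨q, ⟨hqS, hq2b⟩, rfl⟩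
    have hq1e : q.1 = a' := le_antisymm hq1 hqa'
    have hqb' : b' ≤ q.2 := hb'.2 ⟨q, ⟨hqS, hq2b, hq1e⟩, rfl⟩
    rcases hq3 with h | h
    · exact absurd hq1e (ne_of_lt h)
    · exact absurd (le_antisymm hq2 hqb') (ne_of_lt h)
  · rintro ⟨p, ⟨hpS, hpnd⟩, hap, hpa'⟩
    have hpb : b ≤ p.2 := by
      by_contra h
      push_neg at h
      exact absurd (ha'.2 ⟨p, ⟨hpS, h⟩, rfl⟩) (not_le.mpr hpa')
    exact hpnd ⟨(a, b), by exact_mod_cast hab, le_of_lt hap, hpb, Or.inl hap⟩
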